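/- Let G be a finitely generated group of subexponential growth and N ⊴ G a normal subgroup with G/N ≅ ℤ. Then N is finitely generated. -/

import Mathlib

/-- The ball of radius `n` in a group `G` with respect to a generating set `S`:
elements expressible as products of at most `n` elements of `S ∪ S⁻¹`. -/
def wordBall {G : Type*} [Group G] (S : Finset G) (n : ℕ) : Set G :=
  {g | ∃ l : List G, l.length ≤ n ∧ (∀ x ∈ l, x ∈ S ∨ x⁻¹ ∈ S) ∧ l.prod = g}

namespace MilnorAux
variable {G : Type*} [Group G] {S : Finset G}

theorem wordBall_mono {m n : ℕ} (h : m ≤ n) : wordBall S m ⊆ wordBall S n := by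
  rintro g ⟨l, hl, hx, hp⟩; exact ⟨l, hl.trans h, hx, hp⟩

theorem one_mem_wordBall (S : Finset G) (n : ℕ) : (1 : G) ∈ wordBall S n :=
  ⟨[], by simp, by simp, by simp⟩

theorem mul_mem_wordBall {a b : G} {m n : ℕ} (ha : a ∈ wordBall S m)
    (hb : b ∈ wordBall S n) : a * b ∈ wordBall S (m + n) := by
  obtain ⟨l₁, h₁, hx₁, hp₁⟩ := ha
  obtain ⟨l₂, h₂, hx₂, hp₂⟩ := hb
  refine ⟨l₁ ++ l₂, by simpa using Nat.add_le_add h₁ h₂, ?_, by simp [hp₁, hp₂]⟩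
  intro x hx; rcases List.mem_append.1 hx with h | h
  · exact hx₁ x h
  · exact hx₂ x h

theorem inv_mem_wordBall {a : G} {n : ℕ} (ha : a ∈ wordBall S n) :
    a⁻¹ ∈ wordBall S n := by
  obtain ⟨l, hl, hx, hp⟩ := ha
  refine ⟨(l.map (·⁻¹)).reverse, by simpa using hl, ?_, ?_⟩
  · intro x hx'
    simp only [List.mem_reverse, List.mem_map] at hx'
    obtain ⟨y, hy, rfl⟩ := hx'
    rcases hx y hy with h | h
    · exact Or.inr (by simpa using h)
    · exact Or.inl h
  · rw [← hp]; exact (List.prod_inv_reverse l).symm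

theorem exists_mem_wordBall (hgen : Subgroup.closure (S : Set G) = ⊤) (g : G) :
    ∃ n, g ∈ wordBall S n := by
  have hg : g ∈ Subgroup.closure (S : Set G) := hgen ▸ Subgroup.mem_top g
  induction hg using Subgroup.closure_induction with
  | mem x hx => exact ⟨1, [x], by simp, by simpa using Or.inl hx, by simp⟩
  | one => exact ⟨0, one_mem_wordBall S 0⟩
  | mul x y _ _ hx hy =>
      obtain ⟨m, hm⟩ := hx; obtain ⟨n, hn⟩ := hy
      exact ⟨m + n, mul_mem_wordBall hm hn⟩
  | inv x _ hx => obtain ⟨m, hm⟩ := hx; exact ⟨m, inv_mem_wordBall hm⟩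

theorem wordBall_finite (S : Finset G) (n : ℕ) : (wordBall S n).Finite := by
  induction n with
  | zero =>
      refine Set.Finite.subset (Set.finite_singleton 1) ?_
      rintro g ⟨l, hl, -, hp⟩
      simp only [Nat.le_zero, List.length_eq_zero_iff] at hl
      simp [hl] at hp; simp [← hp]
  | succ n ih =>
      have hA : ((S : Set G) ∪ (S : Set G)⁻¹).Finite :=
        S.finite_toSet.union S.finite_toSet.inv
      refine Set.Finite.subset (((hA.insert 1).prod ih).image
        (fun p : G × G => p.1 * p.2)) ?_
      rintro g ⟨l, hl, hx, hp⟩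
      cases l with
      | nil =>
          refine ⟨(1, 1), ⟨Set.mem_insert _ _, one_mem_wordBall S n⟩, by simp [← hp]⟩
      | cons a l' =>
          refine ⟨(a, l'.prod), ⟨?_, ⟨l', by simpa using hl, fun x hx' => hx x (by simp [hx']), rfl⟩⟩, by simp [← hp]⟩
          rcases hx a (by simp) with h | h
          · exact Set.mem_insert_iff.2 (Or.inr (Or.inl h))
          · exact Set.mem_insert_iff.2 (Or.inr (Or.inr (by simpa using h)))

theorem list_prod_mem_wordBall {l : List G} {C : ℕ}
    (h : ∀ x ∈ l, x ∈ wordBall S C) : l.prod ∈ wordBall S (l.length * C) := by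
  induction l with
  | nil => simpa using one_mem_wordBall S 0
  | cons a l' ih =>
      have := mul_mem_wordBall (h a (by simp)) (ih fun x hx => h x (by simp [hx]))
      simpa [List.length_cons, Nat.succ_mul, Nat.add_comm] using this


/-- From subexponential growth: for any `C ≥ 1` there is `m ≥ 1` with
`card (wordBall S (C * m)) < 2 ^ m`. -/
theorem exists_card_lt
    (hsubexp : Filter.Tendsto
      (fun n : ℕ => (Nat.card (wordBall S n) : ℝ) ^ (1 / (n : ℝ)))
      Filter.atTop (nhds 1)) {C : ℕ} (hC : 1 ≤ C) :
    ∃ m : ℕ, 1 ≤ m ∧ Nat.card (wordBall S (C * m)) < 2 ^ m := by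
  have hC' : (0:ℝ) < (C:ℝ) := by exact_mod_cast hC
  have hr : (1 : ℝ) < (2 : ℝ) ^ ((C : ℝ)⁻¹) := by
    apply Real.one_lt_rpow_iff_of_pos (by norm_num) |>.2
    exact Or.inl ⟨by norm_num, by positivity⟩
  obtain ⟨n₀, hn₀⟩ := (hsubexp.eventually_lt_const hr).exists_forall_of_atTop
  refine ⟨n₀ + 1, by omega, ?_⟩
  set m := n₀ + 1
  set n := C * m with hn
  have hnge : n₀ ≤ n := by
    calc n₀ ≤ m := by omega
    _ ≤ C * m := Nat.le_mul_of_pos_left _ (by omega)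
  have hlt := hn₀ n hnge
  have hnpos : 0 < n := by positivity
  set v : ℕ := Nat.card (wordBall S n) with hv
  have hvr : (v : ℝ) < (2 : ℝ) ^ (m : ℝ) := by
    have h1 : ((v : ℝ) ^ (1 / (n : ℝ))) ^ (n : ℝ) = (v : ℝ) := by
      rw [← Real.rpow_mul (by positivity)]
      rw [one_div, inv_mul_cancel₀ (by exact_mod_cast hnpos.ne'), Real.rpow_one]
    have h2 : (((2:ℝ) ^ ((C : ℝ)⁻¹)) ^ (n : ℝ)) = (2:ℝ) ^ (m : ℝ) := by
      rw [← Real.rpow_mul (by norm_num)]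
      congr 1
      have : ((n : ℝ)) = (C : ℝ) * (m : ℝ) := by exact_mod_cast congrArg Nat.cast hn
      rw [this]
      field_simp
    calc (v : ℝ) = ((v : ℝ) ^ (1 / (n : ℝ))) ^ (n : ℝ) := h1.symm
    _ < (((2:ℝ) ^ ((C : ℝ)⁻¹)) ^ (n : ℝ)) := by
        apply Real.rpow_lt_rpow (by positivity) hlt (by exact_mod_cast hnpos)
    _ = (2:ℝ) ^ (m : ℝ) := h2
  have : (v : ℝ) < ((2 ^ m : ℕ) : ℝ) := by
    push_cast
    rw [← Real.rpow_natCast 2 m]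
    exact hvr
  exact_mod_cast this


/-- `t^i * u * t^(-i)`. -/
def zconj (t u : G) (i : ℤ) : G := t ^ i * u * t ^ (-i)

theorem zconj_succ (t u : G) (i : ℤ) : t * zconj t u i * t⁻¹ = zconj t u (i + 1) := by
  simp only [zconj, zpow_add, zpow_one, zpow_neg]
  group

theorem zconj_pred (t u : G) (i : ℤ) : t⁻¹ * zconj t u i * t = zconj t u (i - 1) := by
  have h := zconj_succ t u (i - 1)
  rw [sub_add_cancel] at h
  rw [← h]; group

theorem zconj_inv_eq (t u : G) (i : ℤ) : zconj t⁻¹ u i = zconj t u (-i) := by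
  simp [zconj, inv_zpow, ← zpow_neg]

/-- Product of conjugates `zconj t u j ^ b₁ * zconj t u (j+1) ^ b₂ * ...`. -/
def Qprod (t u : G) : ℤ → List Bool → G
  | _, [] => 1
  | j, b :: r => (if b then zconj t u j else 1) * Qprod t u (j + 1) r

/-- `(t * u^{b₁}) * (t * u^{b₂}) * ...` -/
def Aprod (t u : G) (bs : List Bool) : G :=
  (bs.map fun b => t * (if b then u else 1)).prod

theorem conj_Qprod (t u : G) (j : ℤ) (bs : List Bool) :
    t * Qprod t u j bs * t⁻¹ = Qprod t u (j + 1) bs := by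
  induction bs generalizing j with
  | nil => simp [Qprod]
  | cons b r ih =>
      have : t * ((if b then zconj t u j else 1) * Qprod t u (j + 1) r) * t⁻¹
          = (t * (if b then zconj t u j else 1) * t⁻¹) * (t * Qprod t u (j + 1) r * t⁻¹) := by
        group
      rw [Qprod, this, ih, Qprod]
      congr 1
      cases b
      · simp
      · simpa using zconj_succ t u j

theorem Aprod_eq (t u : G) (bs : List Bool) :
    Aprod t u bs = Qprod t u 1 bs * t ^ (bs.length : ℤ) := by
  induction bs with
  | nil => simp [Aprod, Qprod]
  | cons b r ih =>
      have h1 : Aprod t u (b :: r) = t * (if b then u else 1) * Aprod t u r := by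
        simp [Aprod]
      have hb : t * (if b then u else 1) = (if b then zconj t u 1 else 1) * t := by
        cases b
        · simp
        · simp only [if_true, zconj, zpow_one, zpow_neg]
          group
      rw [h1, ih, Qprod, ← conj_Qprod t u 1 r, hb, List.length_cons]
      push_cast
      rw [zpow_add, zpow_one]
      group

theorem Qprod_mem (t u : G) (j : ℤ) (bs : List Bool) :
    Qprod t u j bs ∈ Subgroup.closure (zconj t u '' Set.Ico j (j + bs.length)) := by
  induction bs generalizing j with
  | nil => simp [Qprod]
  | cons b r ih =>
      rw [Qprod]
      have hmono : Subgroup.closure (zconj t u '' Set.Ico (j+1) (j + 1 + r.length))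
          ≤ Subgroup.closure (zconj t u '' Set.Ico j (j + (b :: r).length)) :=
        Subgroup.closure_mono (Set.image_mono (Set.Ico_subset_Ico (by omega)
          (by simp only [List.length_cons]; push_cast; omega)))
      refine mul_mem ?_ (hmono (ih (j+1)))
      cases b
      · simpa using one_mem _
      · simp only [if_true]
        apply Subgroup.subset_closure
        exact ⟨j, by simp only [Set.mem_Ico, List.length_cons]; constructor; omega; push_cast; omega, rfl⟩

/-- Extraction: from two distinct bool lists of equal length with equal `Qprod`,
some `zconj t u k` lies in the closure of the later ones. -/
theorem Qprod_extract (t u : G) :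
    ∀ (bs₁ bs₂ : List Bool) (j : ℤ), bs₁.length = bs₂.length →
    Qprod t u j bs₁ = Qprod t u j bs₂ → bs₁ ≠ bs₂ →
    ∃ k : ℤ, j ≤ k ∧ k < j + bs₁.length ∧
      zconj t u k ∈ Subgroup.closure (zconj t u '' Set.Ico (k + 1) (j + bs₁.length)) := by
  intro bs₁
  induction bs₁ with
  | nil => intro bs₂ j hlen _ hne
           cases bs₂ <;> simp_all
  | cons b₁ r₁ ih =>
      intro bs₂ j hlen heq hne
      cases bs₂ with
      | nil => simp at hlen
      | cons b₂ r₂ =>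
          have hlen' : r₁.length = r₂.length := by simpa using hlen
          by_cases hb : b₁ = b₂
          · subst hb
            have hr : r₁ ≠ r₂ := by simpa using hne
            rw [Qprod, Qprod] at heq
            have heq' := mul_left_cancel heq
            obtain ⟨k, hk1, hk2, hk3⟩ := ih r₂ (j+1) hlen' heq' hr
            refine ⟨k, by omega, ?_, ?_⟩
            · simp only [List.length_cons]; push_cast at hk2 ⊢; omega
            · refine Subgroup.closure_mono (Set.image_mono (Set.Ico_subset_Ico le_rfl ?_)) hk3
              simp only [List.length_cons]; push_cast; omega
          · -- heads differ, extract zconj t u j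
            refine ⟨j, le_rfl, by simp only [List.length_cons]; push_cast; omega, ?_⟩
            have hsub : ∀ r : List Bool, r.length = r₁.length →
                Qprod t u (j+1) r ∈
                  Subgroup.closure (zconj t u '' Set.Ico (j + 1) (j + ((b₁ :: r₁).length : ℤ))) := by
              intro r hr
              refine Subgroup.closure_mono (Set.image_mono (Set.Ico_subset_Ico le_rfl ?_))
                (Qprod_mem t u (j+1) r)
              rw [hr]; simp only [List.length_cons]; push_cast; omega
            have h1 := hsub r₁ rfl
            have h2 := hsub r₂ hlen'.symm
            rw [Qprod, Qprod] at heq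
            cases b₁ <;> cases b₂
            · exact absurd rfl hb
            · simp only [Bool.false_eq_true, if_false, if_true, one_mul] at heq
              have hz : zconj t u j = Qprod t u (j+1) r₁ * (Qprod t u (j+1) r₂)⁻¹ := by
                rw [heq]; group
              rw [hz]; exact mul_mem h1 (inv_mem h2)
            · simp only [Bool.false_eq_true, if_false, if_true, one_mul] at heq
              have hz : zconj t u j = Qprod t u (j+1) r₂ * (Qprod t u (j+1) r₁)⁻¹ := by
                rw [← heq]; group
              rw [hz]; exact mul_mem h2 (inv_mem h1)
            · exact absurd rfl hb


theorem Aprod_mem_wordBall {t u : G} {T L : ℕ} (ht : t ∈ wordBall S T)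
    (hu : u ∈ wordBall S L) (bs : List Bool) :
    Aprod t u bs ∈ wordBall S (bs.length * (T + L)) := by
  have h : ∀ x ∈ (bs.map fun b => t * (if b then u else 1)), x ∈ wordBall S (T + L) := by
    intro x hx
    simp only [List.mem_map] at hx
    obtain ⟨b, _, rfl⟩ := hx
    refine mul_mem_wordBall ht ?_
    cases b
    · simpa using one_mem_wordBall S L
    · simpa using hu
  have := list_prod_mem_wordBall h
  simpa [Aprod] using this

/-- One-sided stabilization: all `zconj t u k` for `k ≤ b` lie in the closure of
finitely many of them. -/
theorem onesided (hgen : Subgroup.closure (S : Set G) = ⊤)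
    (hsubexp : Filter.Tendsto
      (fun n : ℕ => (Nat.card (wordBall S n) : ℝ) ^ (1 / (n : ℝ)))
      Filter.atTop (nhds 1)) (t u : G) :
    ∃ a b : ℤ, 1 ≤ b ∧ ∀ k : ℤ, k ≤ b →
      zconj t u k ∈ Subgroup.closure (zconj t u '' Set.Icc a b) := by
  obtain ⟨T', hT'⟩ := exists_mem_wordBall hgen t
  obtain ⟨L, hL⟩ := exists_mem_wordBall hgen u
  set T := max T' 1 with hT
  have ht : t ∈ wordBall S T := wordBall_mono (le_max_left _ _) hT'
  have hC : 1 ≤ T + L := by omega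
  obtain ⟨m, hm1, hcard⟩ := exists_card_lt hsubexp hC
  -- find a collision among the 2^m products
  have hfin := wordBall_finite S ((T + L) * m)
  have hΦmem : ∀ ε : Fin m → Bool, Aprod t u (List.ofFn ε) ∈ wordBall S ((T + L) * m) := by
    intro ε
    have := Aprod_mem_wordBall ht hL (List.ofFn ε)
    simpa [List.length_ofFn, Nat.mul_comm] using this
  set Φ : (Fin m → Bool) → hfin.toFinset := fun ε =>
    ⟨Aprod t u (List.ofFn ε), hfin.mem_toFinset.2 (hΦmem ε)⟩ with hΦ
  have hcardlt : Fintype.card hfin.toFinset < Fintype.card (Fin m → Bool) := by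
    rw [Fintype.card_coe, Fintype.card_fun, Fintype.card_bool, Fintype.card_fin]
    have : hfin.toFinset.card = Nat.card (wordBall S ((T + L) * m)) := by
      rw [Nat.card_coe_set_eq, Set.ncard_eq_toFinset_card _ hfin]
    omega
  obtain ⟨ε₁, ε₂, hne, heqΦ⟩ := Fintype.exists_ne_map_eq_of_card_lt Φ hcardlt
  have heqA : Aprod t u (List.ofFn ε₁) = Aprod t u (List.ofFn ε₂) := by
    simpa [hΦ, Subtype.ext_iff] using heqΦ
  have hlen : (List.ofFn ε₁).length = (List.ofFn ε₂).length := by simp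
  have hneL : List.ofFn ε₁ ≠ List.ofFn ε₂ := fun h => hne (List.ofFn_injective h)
  have heqQ : Qprod t u 1 (List.ofFn ε₁) = Qprod t u 1 (List.ofFn ε₂) := by
    have h1 := Aprod_eq t u (List.ofFn ε₁)
    have h2 := Aprod_eq t u (List.ofFn ε₂)
    rw [h1, h2, hlen] at heqA
    exact mul_right_cancel heqA
  obtain ⟨k, hk1, hk2, hk3⟩ := Qprod_extract t u _ _ 1 hlen heqQ hneL
  rw [List.length_ofFn] at hk2 hk3
  -- rewrite Ico as Icc
  have hset : Set.Ico (k + 1) (1 + (m : ℤ)) = Set.Icc (k + 1) (m : ℤ) := by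
    ext x; simp only [Set.mem_Ico, Set.mem_Icc]; omega
  rw [hset] at hk3
  set F := Subgroup.closure (zconj t u '' Set.Icc (k + 1) (m : ℤ)) with hF
  -- conjugation by t⁻¹ preserves F
  have hdown : ∀ g ∈ F, t⁻¹ * g * t ∈ F := by
    intro g hg
    induction hg using Subgroup.closure_induction with
    | mem x hx =>
        obtain ⟨i, hi, rfl⟩ := hx
        rw [zconj_pred]
        rcases eq_or_lt_of_le hi.1 with h | h
        · rw [← h]
          simpa using hk3
        · exact Subgroup.subset_closure ⟨i - 1, ⟨by omega, by have := hi.2; omega⟩, rfl⟩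
    | one => simpa using one_mem F
    | mul x y _ _ hx hy =>
        have h : t⁻¹ * (x * y) * t = (t⁻¹ * x * t) * (t⁻¹ * y * t) := by group
        rw [h]; exact mul_mem hx hy
    | inv x _ hx =>
        have h : t⁻¹ * x⁻¹ * t = (t⁻¹ * x * t)⁻¹ := by group
        rw [h]; exact inv_mem hx
  have hdownit : ∀ d : ℕ, zconj t u (k - d) ∈ F := by
    intro d
    induction d with
    | zero => simpa using hk3
    | succ d ih =>
        have h := hdown _ ih
        rw [zconj_pred] at h
        have : k - (d : ℤ) - 1 = k - ((d + 1 : ℕ) : ℤ) := by push_cast; ring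
        rwa [this] at h
  refine ⟨k + 1, (m : ℤ), by exact_mod_cast hm1, ?_⟩
  intro i hi
  rcases le_or_gt i k with h | h
  · have hd : zconj t u (k - ((k - i).toNat : ℤ)) ∈ F := hdownit (k - i).toNat
    rwa [Int.toNat_of_nonneg (by omega), show k - (k - i) = i by ring] at hd
  · exact Subgroup.subset_closure ⟨i, ⟨by omega, hi⟩, rfl⟩

/-- Two-sided version. -/
theorem twosided (hgen : Subgroup.closure (S : Set G) = ⊤)
    (hsubexp : Filter.Tendsto
      (fun n : ℕ => (Nat.card (wordBall S n) : ℝ) ^ (1 / (n : ℝ)))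
      Filter.atTop (nhds 1)) (t u : G) :
    ∃ a b : ℤ, ∀ k : ℤ,
      zconj t u k ∈ Subgroup.closure (zconj t u '' Set.Icc a b) := by
  obtain ⟨a₁, b₁, hb₁, h₁⟩ := onesided hgen hsubexp t u
  obtain ⟨a₂, b₂, hb₂, h₂⟩ := onesided hgen hsubexp t⁻¹ u
  refine ⟨min a₁ (-b₂), max b₁ (-a₂), ?_⟩
  intro k
  rcases le_or_gt k b₁ with h | h
  · refine Subgroup.closure_mono (Set.image_mono (Set.Icc_subset_Icc ?_ ?_)) (h₁ k h)
    · exact min_le_left _ _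
    · exact le_max_left _ _
  · have hk2 : -k ≤ b₂ := by omega
    have := h₂ (-k) hk2
    rw [zconj_inv_eq, neg_neg] at this
    refine Subgroup.closure_mono ?_ this
    rintro - ⟨i, hi, rfl⟩
    rw [zconj_inv_eq]
    refine ⟨-i, ?_, rfl⟩
    simp only [Set.mem_Icc] at hi ⊢
    omega

end MilnorAux

open MilnorAux in
/-- Milnor's lemma: if `G` is a finitely generated group of subexponential growth
(`v(n)^{1/n} → 1` for some finite generating set) and `N ⊴ G` with `G/N ≅ ℤ`,
then `N` is finitely generated. -/
theorem milnor_lemma {G : Type*} [Group G]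
    (S : Finset G) (hgen : Subgroup.closure (S : Set G) = ⊤)
    (hsubexp : Filter.Tendsto
      (fun n : ℕ => (Nat.card (wordBall S n) : ℝ) ^ (1 / (n : ℝ)))
      Filter.atTop (nhds 1))
    (N : Subgroup G) [N.Normal] (hquot : Nonempty ((G ⧸ N) ≃* Multiplicative ℤ)) :
    N.FG := by
  obtain ⟨e⟩ := hquot
  set φ : G →* Multiplicative ℤ := e.toMonoidHom.comp (QuotientGroup.mk' N) with hφ
  set fz : G → ℤ := fun g => Multiplicative.toAdd (φ g) with hfz
  have fz_mul : ∀ a b : G, fz (a * b) = fz a + fz b := by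
    intro a b; simp [hfz, map_mul]
  have fz_zpow : ∀ (g : G) (i : ℤ), fz (g ^ i) = i * fz g := by
    intro g i; simp [hfz, map_zpow]
  have fz_one : fz 1 = 0 := by simp [hfz]
  have fz_inv : ∀ a : G, fz a⁻¹ = -(fz a) := by
    intro a
    have h := fz_mul a a⁻¹
    rw [mul_inv_cancel, fz_one] at h
    omega
  have hker : ∀ g : G, g ∈ N ↔ fz g = 0 := by
    intro g
    have h1 : fz g = 0 ↔ φ g = 1 := by
      constructor
      · intro h; exact Multiplicative.toAdd.injective (by rw [toAdd_one]; exact h)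
      · intro h; simp [hfz, h]
    rw [h1, hφ]
    simp only [MonoidHom.comp_apply, MulEquiv.coe_toMonoidHom]
    rw [← map_one e]
    rw [e.injective.eq_iff]
    exact (QuotientGroup.eq_one_iff g).symm
  have hsurj : Function.Surjective φ := e.surjective.comp (QuotientGroup.mk'_surjective N)
  obtain ⟨t, ht⟩ := hsurj (Multiplicative.ofAdd 1)
  have hfzt : fz t = 1 := by simp [hfz, ht]
  have fz_tpow : ∀ i : ℤ, fz (t ^ i) = i := by
    intro i; rw [fz_zpow, hfzt, mul_one]
  set us : G → G := fun s => s * t ^ (-(fz s)) with hus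
  set X : Set G := ⋃ s ∈ (S : Set G), Set.range (fun i : ℤ => zconj t (us s) i) with hX
  set H := Subgroup.closure X with hH
  have hfzus : ∀ s : G, fz (us s) = 0 := by
    intro s; rw [hus]; simp only; rw [fz_mul, fz_tpow]; ring
  have hXN : X ⊆ (N : Set G) := by
    rintro - ⟨-, ⟨s, rfl⟩, -, ⟨hs, rfl⟩, ⟨i, rfl⟩⟩
    rw [SetLike.mem_coe, hker]
    simp only [zconj]
    rw [fz_mul, fz_mul, fz_tpow, fz_tpow, hfzus]
    ring
  have hHN : H ≤ N := (Subgroup.closure_le N).2 hXN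
  have hconjH : ∀ (n : ℤ) (g : G), g ∈ H → t ^ n * g * t ^ (-n) ∈ H := by
    intro n g hg
    induction hg using Subgroup.closure_induction with
    | mem x hx =>
        obtain ⟨-, ⟨s, rfl⟩, -, ⟨hs, rfl⟩, ⟨i, rfl⟩⟩ := hx
        have : t ^ n * zconj t (us s) i * t ^ (-n) = zconj t (us s) (n + i) := by
          simp only [zconj, zpow_add, zpow_neg]
          group
        rw [this]
        exact Subgroup.subset_closure (Set.mem_biUnion hs ⟨n + i, rfl⟩)
    | one => simpa using one_mem H
    | mul x y _ _ hx hy =>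
        have h : t ^ n * (x * y) * t ^ (-n) = (t ^ n * x * t ^ (-n)) * (t ^ n * y * t ^ (-n)) := by
          group
        rw [h]; exact mul_mem hx hy
    | inv x _ hx =>
        have h : t ^ n * x⁻¹ * t ^ (-n) = (t ^ n * x * t ^ (-n))⁻¹ := by
          group
        rw [h]; exact inv_mem hx
  set P : Subgroup G :=
    { carrier := {g : G | g * t ^ (-(fz g)) ∈ H}
      one_mem' := by simp [fz_one, one_mem]
      mul_mem' := by
        intro a b ha hb
        simp only [Set.mem_setOf_eq] at ha hb ⊢
        rw [fz_mul]
        have key : a * b * t ^ (-(fz a + fz b)) =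
            (a * t ^ (-(fz a))) * (t ^ (fz a) * (b * t ^ (-(fz b))) * t ^ (-(fz a))) := by
          group
        rw [key]
        exact mul_mem ha (hconjH (fz a) _ hb)
      inv_mem' := by
        intro a ha
        simp only [Set.mem_setOf_eq] at ha ⊢
        rw [fz_inv, neg_neg]
        have key : a⁻¹ * t ^ (fz a) =
            (t ^ (-(fz a)) * (a * t ^ (-(fz a))) * t ^ (-(-(fz a))))⁻¹ := by
          group
        rw [key]
        exact inv_mem (hconjH (-(fz a)) _ ha) } with hP
  have hSP : (S : Set G) ⊆ (P : Set G) := by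
    intro s hs
    show s * t ^ (-(fz s)) ∈ H
    have : s * t ^ (-(fz s)) = zconj t (us s) 0 := by simp [zconj, hus]
    rw [this]
    exact Subgroup.subset_closure (Set.mem_biUnion hs ⟨0, rfl⟩)
  have hPtop : ∀ g : G, g ∈ P := by
    intro g
    have : Subgroup.closure (S : Set G) ≤ P := (Subgroup.closure_le P).2 hSP
    exact this (hgen ▸ Subgroup.mem_top g)
  have hNH : N ≤ H := by
    intro g hg
    have h0 : fz g = 0 := (hker g).1 hg
    have := hPtop g
    simp only [hP, Subgroup.mem_mk, Set.mem_setOf_eq, h0] at this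
    simpa [h0] using this
  -- finitely many conjugates suffice
  have key : ∀ s : G, ∃ ab : ℤ × ℤ, ∀ k : ℤ,
      zconj t (us s) k ∈ Subgroup.closure (zconj t (us s) '' Set.Icc ab.1 ab.2) := by
    intro s
    obtain ⟨a, b, hab⟩ := twosided hgen hsubexp t (us s)
    exact ⟨(a, b), hab⟩
  choose ab hab using key
  set Y : Set G := ⋃ s ∈ (S : Set G), zconj t (us s) '' Set.Icc (ab s).1 (ab s).2 with hY
  have hYfin : Y.Finite :=
    Set.Finite.biUnion S.finite_toSet (fun s _ => (Set.finite_Icc _ _).image _)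
  have hYN : Y ⊆ (N : Set G) := by
    intro y hy
    rw [hY] at hy
    simp only [Set.mem_iUnion, Set.mem_image] at hy
    obtain ⟨s, hs, i, -, rfl⟩ := hy
    exact hXN (Set.mem_biUnion hs ⟨i, rfl⟩)
  have hXY : X ⊆ (Subgroup.closure Y : Set G) := by
    rintro - ⟨-, ⟨s, rfl⟩, -, ⟨hs, rfl⟩, ⟨i, rfl⟩⟩
    refine Subgroup.closure_mono ?_ (hab s i)
    exact Set.subset_biUnion_of_mem (u := fun s =>
      zconj t (us s) '' Set.Icc (ab s).1 (ab s).2) hs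
  rw [Subgroup.fg_iff]
  refine ⟨Y, le_antisymm ?_ ?_, hYfin⟩
  · exact (Subgroup.closure_le N).2 hYN
  · exact le_trans hNH ((Subgroup.closure_le _).2 hXY)
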